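/- In M_2(A) for A a unital K-algebra with char(K) ≠ 2 and non-trivial involution ♮, let u ∈ A satisfy u = -u^♮ ≠ 0 and suppose A is an integral domain. Define A_1 = ((0,u),(u,0)), B_1 = ((u,0),(0,-u)), and recursively X_m = [A_m, B_m], A_{m+1} = [X_m, B_m], B_{m+1} = [X_m, A_m]. Then for every m ≥ 1 there exists v_m ∈ A with 0 ≠ v_m = -v_m^♮ such that A_m = ((0, v_m),(v_m, 0)), B_m = ((-1)^{m+1} v_m · diag(1,-1)), and X_m = (-1)^m 2 v_m^2 (E_{12} - E_{21}) ≠ 0, with v_{m+1} = 4 v_m^3. -/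
import Mathlib


open Matrix

/-- The skew-symmetric elements `{x | star x = -x}` as a `K`-submodule. -/
def skewSubmodule (K M : Type*) [Field K] [StarRing K] [TrivialStar K]
    [AddCommGroup M] [Module K M] [StarAddMonoid M] [StarModule K M] :
    Submodule K M where
  carrier := {x | star x = -x}
  add_mem' := by
    intro a b ha hb
    simp only [Set.mem_setOf_eq] at *
    rw [star_add, ha, hb, neg_add]
  zero_mem' := by simp
  smul_mem' := by
    intro c x hx
    simp only [Set.mem_setOf_eq] at *
    rw [star_smul, hx, star_trivial, smul_neg]

/-- One step of the derived series: span of commutators. -/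
def derivedStep (K A : Type*) [Field K] [Ring A] [Algebra K A] (L : Submodule K A) :
    Submodule K A :=
  Submodule.span K {z | ∃ x ∈ L, ∃ y ∈ L, z = x * y - y * x}

/-- Derived series of a subspace under the commutator bracket. -/
def lieDerSeries (K A : Type*) [Field K] [Ring A] [Algebra K A] (L : Submodule K A) :
    ℕ → Submodule K A
  | 0 => L
  | n + 1 => derivedStep K A (lieDerSeries K A L n)

/-- Lower central series of a subspace under the commutator bracket. -/
def lowerCentral (K A : Type*) [Field K] [Ring A] [Algebra K A] (L : Submodule K A) :
    ℕ → Submodule K A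
  | 0 => L
  | n + 1 => Submodule.span K
      {z | ∃ x ∈ lowerCentral K A L n, ∃ y ∈ L, z = x * y - y * x}

/-- Skew-symmetric matrices (w.r.t. plain transpose) as a submodule. -/
def skewT (K : Type*) [Field K] (n : ℕ) (A : Type*) [Ring A] [Algebra K A] :
    Submodule K (Matrix (Fin n) (Fin n) A) where
  carrier := {X | Xᵀ = -X}
  add_mem' := by
    intro a b ha hb
    simp only [Set.mem_setOf_eq] at *
    rw [transpose_add, ha, hb, neg_add]
  zero_mem' := by simp
  smul_mem' := by
    intro c x hx
    simp only [Set.mem_setOf_eq] at *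
    rw [transpose_smul, hx, smul_neg]

/-- Auxiliary sequence `v 1 = u`, `v (m+1) = 4 * (v m)^3`. -/
def vAux {A : Type*} [Ring A] (u : A) : ℕ → A
  | 0 => u
  | 1 => u
  | n + 2 => 4 * (vAux u (n + 1)) ^ 3

@[simp] lemma vAux_one {A : Type*} [Ring A] (u : A) : vAux u 1 = u := rfl

@[simp] lemma vAux_succ_succ {A : Type*} [Ring A] (u : A) (n : ℕ) :
    vAux u (n + 2) = 4 * (vAux u (n + 1)) ^ 3 := rfl

/-- The inductive construction witnessing non-solvability of the skew Lie
algebra of `M₂(A)` when `char K ≠ 2` and the involution is non-trivial: the recursively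
defined matrices `Aₘ, Bₘ, Xₘ` keep the displayed shape with `vₘ₊₁ = 4 vₘ³` and `Xₘ ≠ 0`. -/
theorem skew_M2_recursion_char_ne_two
    (K : Type*) [Field K] [StarRing K] [TrivialStar K] (hK : ringChar K ≠ 2)
    (A : Type*) [Ring A] [IsDomain A] [Algebra K A] [StarRing A] [StarModule K A]
    (u : A) (hu : star u = -u) (hu0 : u ≠ 0)
    (Am Bm Xm : ℕ → Matrix (Fin 2) (Fin 2) A)
    (hA1 : Am 1 = !![0, u; u, 0])
    (hB1 : Bm 1 = !![u, 0; 0, -u])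
    (hX : ∀ m, 1 ≤ m → Xm m = Am m * Bm m - Bm m * Am m)
    (hA : ∀ m, 1 ≤ m → Am (m + 1) = Xm m * Bm m - Bm m * Xm m)
    (hB : ∀ m, 1 ≤ m → Bm (m + 1) = Xm m * Am m - Am m * Xm m) :
    ∃ v : ℕ → A, v 1 = u ∧ ∀ m, 1 ≤ m →
      v (m + 1) = 4 * (v m) ^ 3 ∧
      v m ≠ 0 ∧ star (v m) = -(v m) ∧
      Am m = !![0, v m; v m, 0] ∧
      Bm m = !![(-1 : A) ^ (m + 1) * v m, 0; 0, (-1 : A) ^ m * v m] ∧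
      Xm m = !![0, (-1 : A) ^ m * (2 * (v m) ^ 2);
                -((-1 : A) ^ m * (2 * (v m) ^ 2)), 0] ∧
      Xm m ≠ 0 := by
  have h2K : (2 : K) ≠ 0 := Ring.two_ne_zero hK
  have h2 : (2 : A) ≠ 0 := by
    intro h
    apply h2K
    apply (algebraMap K A).injective
    rw [map_ofNat, map_zero]
    exact h
  set v : ℕ → A := vAux u with hv
  have h1v : v 1 = u := rfl
  -- shapes of Am and Bm, plus basic facts about v m
  have key : ∀ m, 1 ≤ m → v m ≠ 0 ∧ star (v m) = -(v m) ∧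
      Am m = !![0, v m; v m, 0] ∧
      Bm m = !![(-1 : A) ^ (m + 1) * v m, 0; 0, (-1 : A) ^ m * v m] := by
    intro m
    induction m with
    | zero => omega
    | succ n ih =>
      intro _
      rcases Nat.eq_zero_or_pos n with hn | hn
      · subst hn
        refine ⟨hu0, hu, ?_, ?_⟩
        · rw [h1v]; exact hA1
        · rw [hB1, h1v]; norm_num
      · obtain ⟨hv0, hvs, hAm, hBm⟩ := ih hn
        have hsign : ((-1 : A)) ^ n = 1 ∨ ((-1 : A)) ^ n = -1 :=
          (Nat.even_or_odd n).imp (fun h => h.neg_one_pow) (fun h => h.neg_one_pow)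
        have hXm : Xm n = !![0, (-1 : A) ^ n * (2 * (v n) ^ 2);
            -((-1 : A) ^ n * (2 * (v n) ^ 2)), 0] := by
          rw [hX n hn, hAm, hBm]
          ext i j
          rcases hsign with hs | hs <;> fin_cases i <;> fin_cases j <;>
            simp [Matrix.mul_apply, Fin.sum_univ_two, pow_add, pow_succ, hs] <;>
            noncomm_ring
        have hvsucc : v (n + 1) = 4 * (v n) ^ 3 := by
          obtain ⟨k, rfl⟩ := Nat.exists_eq_add_of_le hn
          simp [hv, add_comm 1 k]
        refine ⟨?_, ?_, ?_, ?_⟩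
        · rw [hvsucc]
          have h4 : (4 : A) ≠ 0 := by
            intro h
            apply h2
            have h22 : (2 : A) * 2 = 0 := by rw [← h]; norm_num
            rcases mul_eq_zero.mp h22 with h' | h' <;> exact h'
          exact mul_ne_zero h4 (pow_ne_zero _ hv0)
        · rw [hvsucc, StarMul.star_mul, star_pow, hvs, star_ofNat]
          noncomm_ring
        · rw [hA n hn, hXm, hBm]
          ext i j
          rcases hsign with hs | hs <;> fin_cases i <;> fin_cases j <;>
            simp [Matrix.mul_apply, Fin.sum_univ_two, hvsucc, pow_add, pow_succ, hs] <;>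
            noncomm_ring
        · rw [hB n hn, hXm, hAm]
          ext i j
          rcases hsign with hs | hs <;> fin_cases i <;> fin_cases j <;>
            simp [Matrix.mul_apply, Fin.sum_univ_two, hvsucc, pow_add, pow_succ, hs] <;>
            noncomm_ring
  refine ⟨v, rfl, ?_⟩
  intro m hm
  obtain ⟨hv0, hvs, hAm, hBm⟩ := key m hm
  have hvsucc : v (m + 1) = 4 * (v m) ^ 3 := by
    obtain ⟨k, rfl⟩ := Nat.exists_eq_add_of_le hm
    simp [hv, add_comm 1 k]
  have hsign : ((-1 : A)) ^ m = 1 ∨ ((-1 : A)) ^ m = -1 :=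
    (Nat.even_or_odd m).imp (fun h => h.neg_one_pow) (fun h => h.neg_one_pow)
  have hXm : Xm m = !![0, (-1 : A) ^ m * (2 * (v m) ^ 2);
      -((-1 : A) ^ m * (2 * (v m) ^ 2)), 0] := by
    rw [hX m hm, hAm, hBm]
    ext i j
    rcases hsign with hs | hs <;> fin_cases i <;> fin_cases j <;>
      simp [Matrix.mul_apply, Fin.sum_univ_two, pow_add, pow_succ, hs] <;>
      noncomm_ring
  refine ⟨hvsucc, hv0, hvs, hAm, hBm, hXm, ?_⟩
  intro h0
  rw [hXm] at h0
  have h01 : (-1 : A) ^ m * (2 * (v m) ^ 2) = 0 := by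
    have := congrFun (congrFun h0 0) 1
    simpa using this
  have hne : (-1 : A) ^ m * (2 * (v m) ^ 2) ≠ 0 :=
    mul_ne_zero (pow_ne_zero _ (neg_ne_zero.mpr one_ne_zero))
      (mul_ne_zero h2 (pow_ne_zero _ hv0))
  exact hne h01
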